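/- The q-series identity of Andrews holds as an identity of formal power series: Σ_{n=0}^{∞} q^{n(n+1)/2} / ((1+q)(1+q²)⋯(1+q^n)) = 1 + Σ_{n=0}^{∞} (−1)^n q^{n+1} (1−q)(1−q²)⋯(1−q^n). -/

import Mathlib

open PowerSeries Finset

noncomputable section AndrewsAux

abbrev PS := PowerSeries ℚ

def qb : ℕ → ℕ → PS
  | 0, _ => 1
  | _+1, 0 => 1
  | k+1, j+1 => qb k (j+1) + (X : PS)^(k+1) * qb (k+1) j
  termination_by k j => k + j

@[simp] lemma qb_zero_left (j : ℕ) : qb 0 j = 1 := by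
  cases j <;> rw [qb]

@[simp] lemma qb_zero_right (k : ℕ) : qb k 0 = 1 := by
  cases k <;> rw [qb]

lemma qb_succ (k j : ℕ) : qb (k+1) (j+1) = qb k (j+1) + (X : PS)^(k+1) * qb (k+1) j := by
  rw [qb]

lemma qb_geom_right (k : ℕ) : (1 - (X : PS)) * qb k 1 = 1 - (X : PS)^(k+1) := by
  induction k with
  | zero => simp
  | succ k ih =>
    rw [qb_succ, qb_zero_right]
    linear_combination ih

lemma qb_geom_left (j : ℕ) : (1 - (X : PS)) * qb 1 j = 1 - (X : PS)^(j+1) := by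
  induction j with
  | zero => simp
  | succ j ih =>
    rw [qb_succ, qb_zero_left]
    linear_combination (X : PS) * ih

lemma qbR (k : ℕ) : ∀ j, (1 - (X : PS)^(j+1)) * qb k (j+1) = (1 - (X : PS)^(k+1)) * qb (k+1) j := by
  induction k with
  | zero =>
    intro j
    rw [qb_zero_left]
    linear_combination - qb_geom_left j
  | succ k ihk =>
    intro j
    induction j with
    | zero =>
      rw [qb_zero_right]
      linear_combination qb_geom_right (k+1)
    | succ j ihj =>
      rw [qb_succ k (j+1), qb_succ (k+1) j]
      linear_combination ihk (j+1) + (X : PS)^(k+2) * ihj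

lemma qbP2 (k j : ℕ) :
    qb (k+1) (j+1) = (X : PS)^(j+1) * qb k (j+1) + qb (k+1) j := by
  rw [qb_succ]
  linear_combination qbR k j

def tri : ℕ → ℕ
  | 0 => 0
  | n+1 => tri n + (n+1)

lemma tri_zero : tri 0 = 0 := rfl

lemma tri_succ (n : ℕ) : tri (n+1) = tri n + (n+1) := rfl

lemma two_tri (n : ℕ) : 2 * tri n = n * (n+1) := by
  induction n with
  | zero => rfl
  | succ n ih =>
    rw [tri_succ]
    ring_nf
    ring_nf at ih
    omega

lemma tri_eq (n : ℕ) : n * (n+1) / 2 = tri n := by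
  rw [← two_tri]
  omega

lemma tri_ge (n : ℕ) : n ≤ tri n := by
  induction n with
  | zero => simp [tri]
  | succ n ih => rw [tri_succ]; omega

/-- q-binomial theorem. -/
lemma qbG (n : ℕ) :
    ∏ i ∈ range n, (1 - (X : PS)^(i+1)) =
      ∑ j ∈ range (n+1), (-1 : PS)^j * (X : PS)^(tri j) * qb (n - j) j := by
  induction n with
  | zero => simp [tri]
  | succ n ih =>
    rw [prod_range_succ, ih]
    rw [sum_range_succ (fun j => (-1 : PS)^j * (X : PS)^(tri j) * qb (n + 1 - j) j) (n+1)]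
    rw [sum_range_succ' (fun j => (-1 : PS)^j * (X : PS)^(tri j) * qb (n + 1 - j) j) n]
    have hsplit : ∑ j ∈ range n,
        (-1 : PS)^(j+1) * (X : PS)^(tri (j+1)) * qb (n + 1 - (j+1)) (j+1)
        = ∑ j ∈ range n, ((-1 : PS)^(j+1) * (X : PS)^(tri (j+1)) * qb (n - (j+1)) (j+1)
            + -((X : PS)^(n+1) * ((-1 : PS)^j * (X : PS)^(tri j) * qb (n - j) j))) := by
      refine sum_congr rfl fun j hj => ?_
      have hjn : j < n := mem_range.mp hj
      have e1 : n + 1 - (j+1) = (n - (j+1)) + 1 := by omega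
      rw [e1, qb_succ]
      have e2 : n - (j+1) + 1 = n - j := by omega
      rw [e2, tri_succ]
      have h : (X : PS)^(n-j) * (X : PS)^(j+1) = (X : PS)^(n+1) := by
        rw [← pow_add]; congr 1; omega
      rw [pow_add (X : PS) (tri j) (j+1)]
      linear_combination ((-1 : PS)^(j+1) * (X : PS)^(tri j) * qb (n - j) j) * h
    rw [hsplit, sum_add_distrib]
    have hS1 : ∑ j ∈ range (n+1), (-1 : PS)^j * (X : PS)^(tri j) * qb (n - j) j
        = ∑ j ∈ range n, (-1 : PS)^(j+1) * (X : PS)^(tri (j+1)) * qb (n - (j+1)) (j+1)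
          + (-1 : PS)^0 * (X : PS)^(tri 0) * qb (n - 0) 0 :=
      sum_range_succ' _ n
    have hS2 : ∑ j ∈ range (n+1), (-1 : PS)^j * (X : PS)^(tri j) * qb (n - j) j
        = ∑ j ∈ range n, (-1 : PS)^j * (X : PS)^(tri j) * qb (n - j) j
          + (-1 : PS)^n * (X : PS)^(tri n) * qb (n - n) n :=
      sum_range_succ _ n
    have hneg : ∑ j ∈ range n, -((X : PS)^(n+1) * ((-1 : PS)^j * (X : PS)^(tri j) * qb (n - j) j))
        = -((X : PS)^(n+1) * ∑ j ∈ range n, (-1 : PS)^j * (X : PS)^(tri j) * qb (n - j) j) := by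
      rw [Finset.sum_neg_distrib, ← Finset.mul_sum]
    rw [hneg]
    simp only [qb_zero_left, qb_zero_right, Nat.sub_self, Nat.sub_zero, mul_one, tri_zero,
      pow_zero, one_mul] at hS1 hS2 ⊢
    simp only [tri_succ, pow_add] at hsplit hS1 hS2 ⊢
    linear_combination hS1 - (X:PS)^(n+1) * hS2


def SS (j K : ℕ) : PS := ∑ k ∈ range (K+1), (-1 : PS)^k * (X : PS)^k * qb k j

lemma SS_succ (j K : ℕ) :
    SS j (K+1) = SS j K + (-1 : PS)^(K+1) * (X : PS)^(K+1) * qb (K+1) j :=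
  sum_range_succ _ _

lemma Htel (j : ℕ) : ∀ K, (1 + (X : PS)^(j+2)) * SS (j+1) K
    = SS j (K+1) + (-1 : PS)^K * (X : PS)^(K+1) * qb (K+1) (j+1) := by
  intro K
  induction K with
  | zero =>
    simp only [SS, zero_add, sum_range_one, sum_range_succ, sum_range_zero, pow_zero, pow_one,
      one_mul, mul_one, qb_zero_left]
    rw [qb_succ 0 j, qb_zero_left]
    linear_combination (X : PS) * qb_geom_left j
  | succ K ih =>
    rw [SS_succ (j+1) K, SS_succ j (K+1)]
    linear_combination ih + (-1 : PS)^K * (X : PS)^(K+2) * qbP2 (K+1) j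

def Qp (j : ℕ) : PS := ∏ i ∈ range (j+1), (1 + (X : PS)^(i+1))

lemma geomneg (K : ℕ) :
    (1 + (X : PS)) * ∑ k ∈ range (K+1), (-1 : PS)^k * (X : PS)^k = 1 + (-1 : PS)^K * (X : PS)^(K+1) := by
  induction K with
  | zero => simp
  | succ K ih =>
    rw [sum_range_succ]
    linear_combination ih

lemma HQ (j : ℕ) : ∀ K, ∃ E : PS, Qp j * SS j K = 1 + (X : PS)^(K+1) * E := by
  induction j with
  | zero =>
    intro K
    refine ⟨(-1 : PS)^K, ?_⟩
    have h : SS 0 K = ∑ k ∈ range (K+1), (-1 : PS)^k * (X : PS)^k := by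
      unfold SS; simp
    rw [h]
    have : Qp 0 = 1 + (X : PS) := by unfold Qp; simp
    rw [this, geomneg]
    ring
  | succ j ih =>
    intro K
    obtain ⟨E, hE⟩ := ih (K+1)
    refine ⟨(X : PS) * E + (-1 : PS)^K * (Qp j * qb (K+1) (j+1)), ?_⟩
    have hQ : Qp (j+1) = Qp j * (1 + (X : PS)^(j+2)) := prod_range_succ _ _
    rw [hQ, mul_assoc, Htel j K, mul_add, hE]
    ring

lemma coeff_X_pow_mul_eq_zero {m e : ℕ} (h : m < e) (f : PS) :
    (coeff (R := ℚ) m) ((X : PS)^e * f) = 0 := by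
  rw [coeff_mul]
  refine sum_eq_zero fun p hp => ?_
  have hmem := Finset.HasAntidiagonal.mem_antidiagonal.mp hp
  rw [coeff_X_pow, if_neg (by omega), zero_mul]

lemma constQp (j : ℕ) : constantCoeff (R := ℚ) (Qp j) ≠ 0 := by
  have : constantCoeff (R := ℚ) (Qp j) = 1 := by
    unfold Qp
    rw [map_prod]
    refine prod_eq_one fun i _ => ?_
    simp
  rw [this]
  exact one_ne_zero

lemma key (m j : ℕ) (hj : j ≤ m) :
    (coeff (R := ℚ) m) ((X : PS)^(tri (j+1)) * SS j (m-j)) =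
      (coeff (R := ℚ) m) ((X : PS)^(tri (j+1)) * (Qp j)⁻¹) := by
  obtain ⟨E, hE⟩ := HQ j (m-j)
  have hQi : Qp j * (Qp j)⁻¹ = 1 := PowerSeries.mul_inv_cancel _ (constQp j)
  have hS : SS j (m-j) = (Qp j)⁻¹ + (X : PS)^(m-j+1) * (E * (Qp j)⁻¹) := by
    have h1 : SS j (m-j) = ((Qp j)⁻¹) * (Qp j * SS j (m-j)) := by
      rw [← mul_assoc, mul_comm ((Qp j)⁻¹), hQi, one_mul]
    rw [h1, hE]
    ring
  rw [hS, mul_add, map_add]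
  have e1 : (X : PS)^(tri (j+1)) * ((X : PS)^(m-j+1) * (E * (Qp j)⁻¹))
      = (X : PS)^(tri (j+1) + (m-j+1)) * (E * (Qp j)⁻¹) := by
    rw [← mul_assoc, ← pow_add]
  have h2 : (coeff (R := ℚ) m) ((X : PS)^(tri (j+1) + (m-j+1)) * (E * (Qp j)⁻¹)) = 0 :=
    coeff_X_pow_mul_eq_zero (by have := tri_ge (j+1); omega) _
  rw [e1, h2, add_zero]

end AndrewsAux

open Finset

theorem stmt_18 :
    ∀ m : ℕ,
      (PowerSeries.coeff (R := ℚ) m)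
        (∑ n ∈ Finset.range (m + 1),
          (PowerSeries.X : PowerSeries ℚ) ^ (n * (n + 1) / 2) *
            (∏ i ∈ Finset.range n, (1 + (PowerSeries.X : PowerSeries ℚ) ^ (i + 1)))⁻¹) =
      (PowerSeries.coeff (R := ℚ) m)
        (1 + ∑ n ∈ Finset.range (m + 1),
          (-1 : PowerSeries ℚ) ^ n * (PowerSeries.X : PowerSeries ℚ) ^ (n + 1) *
            ∏ i ∈ Finset.range n, (1 - (PowerSeries.X : PowerSeries ℚ) ^ (i + 1))) := by
  intro m
  have hL : (∑ n ∈ Finset.range (m + 1),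
        (PowerSeries.X : PowerSeries ℚ) ^ (n * (n + 1) / 2) *
          (∏ i ∈ Finset.range n, (1 + (PowerSeries.X : PowerSeries ℚ) ^ (i + 1)))⁻¹)
      = 1 + ∑ j ∈ range m, (X : PS)^(tri (j+1)) * (Qp j)⁻¹ := by
    rw [sum_range_succ' (fun n => (PowerSeries.X : PowerSeries ℚ) ^ (n * (n + 1) / 2) *
        (∏ i ∈ Finset.range n, (1 + (PowerSeries.X : PowerSeries ℚ) ^ (i + 1)))⁻¹) m]
    have h0 : (PowerSeries.X : PowerSeries ℚ) ^ (0 * (0 + 1) / 2) *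
        (∏ i ∈ Finset.range 0, (1 + (PowerSeries.X : PowerSeries ℚ) ^ (i + 1)))⁻¹ = 1 := by
      simp
    rw [h0, add_comm]
    congr 1
    refine sum_congr rfl fun j hj => ?_
    rw [tri_eq (j+1)]
    rfl
  have hR : (∑ n ∈ Finset.range (m + 1),
        (-1 : PowerSeries ℚ) ^ n * (PowerSeries.X : PowerSeries ℚ) ^ (n + 1) *
          ∏ i ∈ Finset.range n, (1 - (PowerSeries.X : PowerSeries ℚ) ^ (i + 1)))
      = ∑ j ∈ range (m+1), (X : PS)^(tri (j+1)) * SS j (m-j) := by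
    calc ∑ n ∈ range (m+1), (-1:PS)^n * (X:PS)^(n+1) * ∏ i ∈ range n, (1 - (X:PS)^(i+1))
        = ∑ n ∈ range (m+1), ∑ j ∈ range (n+1),
            (-1:PS)^n * (X:PS)^(n+1) * ((-1:PS)^j * (X:PS)^(tri j) * qb (n-j) j) := by
          refine sum_congr rfl fun n _ => ?_
          rw [qbG n, mul_sum]
      _ = ∑ j ∈ range (m+1), ∑ n ∈ Ico j (m+1),
            (-1:PS)^n * (X:PS)^(n+1) * ((-1:PS)^j * (X:PS)^(tri j) * qb (n-j) j) := by
          refine Finset.sum_comm' fun n j => ?_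
          simp only [mem_range, mem_Ico]
          omega
      _ = ∑ j ∈ range (m+1), (X : PS)^(tri (j+1)) * SS j (m-j) := by
          refine sum_congr rfl fun j hj => ?_
          have hjm : j ≤ m := Nat.lt_succ_iff.mp (mem_range.mp hj)
          rw [sum_Ico_eq_sum_range]
          have hrange : m + 1 - j = (m - j) + 1 := by omega
          rw [hrange]
          unfold SS
          rw [mul_sum]
          refine sum_congr rfl fun k hk => ?_
          have hsub : j + k - j = k := by omega
          rw [hsub, tri_succ]
          have hneg1 : ((-1 : PS)^j) * ((-1 : PS)^j) = 1 := by
            rw [← pow_add, ← two_mul, pow_mul, neg_one_sq, one_pow]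
          linear_combination ((-1:PS)^k * (X:PS)^(tri j + j + 1 + k) * qb k j) * hneg1
  rw [hL, hR]
  rw [map_add, map_add, map_sum, map_sum]
  have hsum : ∑ j ∈ range (m+1), (coeff (R := ℚ) m) ((X:PS)^(tri (j+1)) * SS j (m-j))
      = ∑ j ∈ range (m+1), (coeff (R := ℚ) m) ((X:PS)^(tri (j+1)) * (Qp j)⁻¹) :=
    sum_congr rfl fun j hj => key m j (Nat.lt_succ_iff.mp (mem_range.mp hj))
  rw [hsum, sum_range_succ]
  have hz : (coeff (R := ℚ) m) ((X:PS)^(tri (m+1)) * (Qp m)⁻¹) = 0 :=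
    coeff_X_pow_mul_eq_zero (by have := tri_ge (m+1); omega) _
  rw [hz, add_zero]
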